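/- arXiv:1104.2029 — 2 statements merged into one kernel-verified Lean document; each statement's English description precedes it below -/
import Mathlib

section
/- Let X be a finite totally ordered set, M a QHS on X, and u = u_1…u_m a singular monomial with respect to M such that u_m is pure. Suppose 1 ≤ k < m and v = v_1…v_k is a degree-k monomial with v − u_1…u_k ∈ I_M. Then there exists a degree-m monomial w = w_1…w_m such that w_m > v_k and u − w ∈ I_M. -/
noncomputable section

/-- The monomial in the free algebra `K⟨X⟩ = MonoidAlgebra K (FreeMonoid X)`
corresponding to a word `w`. -/
def mOfW (K : Type*) [Field K] {X : Type*} (w : FreeMonoid X) :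
    MonoidAlgebra K (FreeMonoid X) :=
  MonoidAlgebra.single w 1

/-- The degree-`m` monomial `u_1 u_2 ⋯ u_m`. -/
def mOf (K : Type*) [Field K] {X : Type*} {m : ℕ} (u : Fin m → X) :
    MonoidAlgebra K (FreeMonoid X) :=
  mOfW K (FreeMonoid.ofList (List.ofFn u))

/-- The degree-2 monomial `ab`. -/
def m2 (K : Type*) [Field K] {X : Type*} (a b : X) :
    MonoidAlgebra K (FreeMonoid X) :=
  mOfW K (FreeMonoid.of a * FreeMonoid.of b)

/-- The support of an element of `K⟨X⟩`: the set of words occurring with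
nonzero coefficient. -/
def suppOf {K X : Type*} [Field K] (f : MonoidAlgebra K (FreeMonoid X)) :
    Finset (FreeMonoid X) :=
  Finsupp.support f.coeff

/-- The two-sided ideal generated by a set `s` in a `K`-algebra, viewed as the
`K`-submodule spanned by all products `p * a * q` with `a ∈ s`. -/
def idealSpan (K : Type*) [Field K] {A : Type*} [Ring A] [Algebra K A]
    (s : Set A) : Submodule K A :=
  Submodule.span K {x | ∃ p q : A, ∃ a ∈ s, x = p * a * q}

/-- `M` is a Quasierhöhungssystem (QHS) on the totally ordered set `X`. -/
def IsQHS (K : Type*) [Field K] {X : Type*} [LinearOrder X]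
    (M : Set (MonoidAlgebra K (FreeMonoid X))) : Prop :=
  M.PairwiseDisjoint (fun g => (suppOf g : Set (FreeMonoid X))) ∧
  (⋃ g ∈ M, (suppOf g : Set (FreeMonoid X))) =
    {w | ∃ a b : X, b ≤ a ∧ w = FreeMonoid.of a * FreeMonoid.of b} ∧
  ∀ g ∈ M,
    (∃ a b : X, b ≤ a ∧ g = m2 K a b) ∨
    (∃ a b c d : X, d ≤ c ∧ c < b ∧ b ≤ a ∧ g = m2 K a b - m2 K c d) ∨
    (∃ a b d : X, d < b ∧ b < a ∧ g = m2 K a b - m2 K b d)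

/-- The maximal element `b = max X`. -/
def topEl (X : Type*) [Fintype X] [LinearOrder X] [Nonempty X] : X :=
  Finset.univ.max' Finset.univ_nonempty

/-- The minimal element `a = min X`. -/
def botEl (X : Type*) [Fintype X] [LinearOrder X] [Nonempty X] : X :=
  Finset.univ.min' Finset.univ_nonempty

/-- The ideal `I_M`, generated by `M' = M \ {ba}` where `a = min X`, `b = max X`. -/
def qhsIdeal (K : Type*) [Field K] {X : Type*} [Fintype X] [LinearOrder X] [Nonempty X]
    (M : Set (MonoidAlgebra K (FreeMonoid X))) :
    Submodule K (MonoidAlgebra K (FreeMonoid X)) :=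
  idealSpan K (M \ {m2 K (topEl X) (botEl X)})

/-- The right-to-left lexicographical strict order on degree-`m` monomials. -/
def rlLt {X : Type*} [LinearOrder X] {m : ℕ} (u v : Fin m → X) : Prop :=
  ∃ j : Fin m, u j < v j ∧ ∀ l : Fin m, j < l → u l = v l

/-- The monomial `u` is minimal with respect to the QHS `M`. -/
def MinimalMon (K : Type*) [Field K] {X : Type*} [Fintype X] [LinearOrder X] [Nonempty X]
    (M : Set (MonoidAlgebra K (FreeMonoid X))) {m : ℕ} (u : Fin m → X) : Prop :=
  mOf K u ∉ qhsIdeal K M ∧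
    ∀ v : Fin m → X, mOf K u - mOf K v ∈ qhsIdeal K M → u = v ∨ rlLt u v

/-- The monomial `u` is tame with respect to the QHS `M`. -/
def TameMon (K : Type*) [Field K] {X : Type*} [Fintype X] [LinearOrder X] [Nonempty X]
    (M : Set (MonoidAlgebra K (FreeMonoid X))) {m : ℕ} (u : Fin m → X) : Prop :=
  MinimalMon K M u ∧ ∃ v : Fin m → X, ∃ j : Fin m,
    mOf K u - mOf K v ∈ qhsIdeal K M ∧ v j = topEl X ∧ ∀ l : Fin m, j < l → v l = u l

/-- The monomial `u` is singular with respect to the QHS `M`: minimal and not tame. -/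
def SingularMon (K : Type*) [Field K] {X : Type*} [Fintype X] [LinearOrder X] [Nonempty X]
    (M : Set (MonoidAlgebra K (FreeMonoid X))) {m : ℕ} (u : Fin m → X) : Prop :=
  MinimalMon K M u ∧ ¬ TameMon K M u

/-- The QHS `M` is regular: for some positive `m` there are no singular monomials
of degree `m`. -/
def RegularQHS (K : Type*) [Field K] {X : Type*} [Fintype X] [LinearOrder X] [Nonempty X]
    (M : Set (MonoidAlgebra K (FreeMonoid X))) : Prop :=
  ∃ m : ℕ, 0 < m ∧ ∀ u : Fin m → X, ¬ SingularMon K M u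

/-- `e ∈ X` is pure with respect to `M`: whenever `ab - ce ∈ M`,
one has `a ≥ b > c ≥ e`. -/
def PureEl (K : Type*) [Field K] {X : Type*} [LinearOrder X]
    (M : Set (MonoidAlgebra K (FreeMonoid X))) (e : X) : Prop :=
  ∀ a b c : X, m2 K a b - m2 K c e ∈ M → e ≤ c ∧ c < b ∧ b ≤ a

namespace QHSAux

open MonoidAlgebra

variable {K : Type*} [Field K] {X : Type*}

/-- Monomial of a list. -/
def mL (K : Type*) [Field K] {X : Type*} (l : List X) : MonoidAlgebra K (FreeMonoid X) :=
  MonoidAlgebra.single (FreeMonoid.ofList l) 1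

lemma mL_append (l l' : List X) : mL K (l ++ l') = mL K l * mL K l' := by
  rw [mL, mL, mL, MonoidAlgebra.single_mul_single, one_mul]
  rfl

lemma m2_eq (a b : X) : m2 K a b = mL K [a, b] := rfl

lemma mOf_eq {m : ℕ} (u : Fin m → X) : mOf K u = mL K (List.ofFn u) := rfl

lemma mul_mem_idealSpan {A : Type*} [Ring A] [Algebra K A] {s : Set A} {x : A}
    (hx : x ∈ idealSpan K s) (p q : A) : p * x * q ∈ idealSpan K s := by
  induction hx using Submodule.span_induction with
  | mem y hy =>
    obtain ⟨p', q', a, ha, rfl⟩ := hy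
    exact Submodule.subset_span ⟨p * p', q' * q, a, ha, by noncomm_ring⟩
  | zero => simpa using Submodule.zero_mem _
  | add y z _ _ hy hz =>
    have : p * (y + z) * q = p * y * q + p * z * q := by noncomm_ring
    rw [this]; exact Submodule.add_mem _ hy hz
  | smul c y _ hy =>
    have : p * (c • y) * q = c • (p * y * q) := by
      rw [mul_smul_comm, smul_mul_assoc]
    rw [this]; exact Submodule.smul_mem _ _ hy

lemma gen_mem_idealSpan {A : Type*} [Ring A] [Algebra K A] {s : Set A} {g : A}
    (hg : g ∈ s) (p q : A) : p * g * q ∈ idealSpan K s :=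
  Submodule.subset_span ⟨p, q, g, hg, rfl⟩

section M

variable [Fintype X] [LinearOrder X] [Nonempty X]
variable (K) in
/-- congruence mod the ideal -/
def Cong (M : Set (MonoidAlgebra K (FreeMonoid X))) (l l' : List X) : Prop :=
  mL K l - mL K l' ∈ qhsIdeal K M

variable {M : Set (MonoidAlgebra K (FreeMonoid X))}

lemma Cong.refl (l : List X) : Cong K M l l := by
  simp [Cong, Submodule.zero_mem]

lemma Cong.symm {l l' : List X} (h : Cong K M l l') : Cong K M l' l := by
  have := Submodule.neg_mem _ h
  rwa [neg_sub] at this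

lemma Cong.trans {l l' l'' : List X} (h : Cong K M l l') (h' : Cong K M l' l'') :
    Cong K M l l'' := by
  have := Submodule.add_mem _ h h'
  rwa [sub_add_sub_cancel] at this

lemma Cong.append_right {l l' : List X} (h : Cong K M l l') (t : List X) :
    Cong K M (l ++ t) (l' ++ t) := by
  have := mul_mem_idealSpan h 1 (mL K t)
  rw [one_mul, sub_mul] at this
  rwa [Cong, mL_append, mL_append]

lemma cong_rewrite {a b c d : X}
    (hg : m2 K a b - m2 K c d ∈ M \ {m2 K (topEl X) (botEl X)}) (p s : List X) :
    Cong K M (p ++ [a, b] ++ s) (p ++ [c, d] ++ s) := by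
  have := gen_mem_idealSpan (K := K) hg (mL K p) (mL K s)
  rw [mul_sub, sub_mul, m2_eq, m2_eq] at this
  rwa [Cong, mL_append, mL_append, mL_append, mL_append]

lemma mem_of_mono_factor {a b : X}
    (hg : m2 K a b ∈ M \ {m2 K (topEl X) (botEl X)}) (p s : List X) :
    mL K (p ++ [a, b] ++ s) ∈ qhsIdeal K M := by
  have := gen_mem_idealSpan (K := K) hg (mL K p) (mL K s)
  rw [m2_eq] at this
  rwa [mL_append, mL_append]

end M
end QHSAux
namespace QHSAux
variable {K : Type*} [Field K] {X : Type*}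

lemma single_inj' {w w' : FreeMonoid X} (h : (MonoidAlgebra.single w (1:K)) = MonoidAlgebra.single w' 1) :
    w = w' :=
  (MonoidAlgebra.single_left_inj one_ne_zero).mp h

lemma m2_inj {a b c d : X} (h : m2 K a b = m2 K c d) : a = c ∧ b = d := by
  have h2 : FreeMonoid.ofList [a, b] = FreeMonoid.ofList [c, d] := single_inj' h
  have h3 : ([a, b] : List X) = [c, d] := h2
  simp only [List.cons.injEq, and_true] at h3
  exact h3

lemma sub_ne_single {w₁ w₂ t : FreeMonoid X} (h12 : w₁ ≠ w₂) :
    MonoidAlgebra.single w₁ (1:K) - MonoidAlgebra.single w₂ 1 ≠ MonoidAlgebra.single t 1 := by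
  intro h
  have h' : (Finsupp.single w₁ (1:K) - Finsupp.single w₂ 1 : FreeMonoid X →₀ K)
      = Finsupp.single t 1 := congrArg MonoidAlgebra.coeff h
  have h1 := DFunLike.congr_fun h' w₁
  have h2 := DFunLike.congr_fun h' w₂
  rw [Finsupp.sub_apply, Finsupp.single_eq_same, Finsupp.single_eq_of_ne' (Ne.symm h12)] at h1
  rw [Finsupp.sub_apply, Finsupp.single_eq_same, Finsupp.single_eq_of_ne' h12] at h2
  by_cases ht : t = w₁
  · subst ht
    rw [Finsupp.single_eq_of_ne' h12] at h2
    simp at h2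
  · rw [Finsupp.single_eq_of_ne' ht] at h1
    simp at h1

lemma mem_supp_sub {w₁ w₂ t : FreeMonoid X}
    (ht : t ∈ suppOf (MonoidAlgebra.single w₁ (1:K) - MonoidAlgebra.single w₂ 1)) :
    t = w₁ ∨ t = w₂ := by
  by_contra h
  push_neg at h
  have := Finsupp.mem_support_iff.mp (show t ∈ Finsupp.support (Finsupp.single w₁ (1:K) - Finsupp.single w₂ 1) from ht)
  apply this
  rw [Finsupp.sub_apply, Finsupp.single_eq_of_ne' (Ne.symm h.1),
    Finsupp.single_eq_of_ne' (Ne.symm h.2), sub_zero]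

lemma mem_supp_single {w t : FreeMonoid X}
    (ht : t ∈ suppOf (MonoidAlgebra.single w (1:K))) : t = w := by
  by_contra h
  have := Finsupp.mem_support_iff.mp (show t ∈ Finsupp.support (Finsupp.single w (1:K)) from ht)
  exact this (Finsupp.single_eq_of_ne' (Ne.symm h))

section M
variable [Fintype X] [LinearOrder X] [Nonempty X]
variable {M : Set (MonoidAlgebra K (FreeMonoid X))}

lemma listpair_of_word {x y a b : X} (h : FreeMonoid.ofList [x, y] = FreeMonoid.ofList [a, b]) :
    x = a ∧ y = b := by
  have h3 : ([x, y] : List X) = [a, b] := h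
  simp only [List.cons.injEq, and_true] at h3
  exact h3

lemma classify (hM : IsQHS K M) {x y : X} (hyx : y ≤ x) :
    (x = topEl X ∧ y = botEl X) ∨
    m2 K x y ∈ M \ {m2 K (topEl X) (botEl X)} ∨
    (∃ a b : X, (m2 K a b - m2 K x y ∈ M \ {m2 K (topEl X) (botEl X)}) ∧
      m2 K a b - m2 K x y ∈ M ∧ x ≤ b) ∨
    (∃ c d : X, (m2 K x y - m2 K c d ∈ M \ {m2 K (topEl X) (botEl X)}) ∧ d < y) := by
  have hw : FreeMonoid.ofList [x, y] ∈ ⋃ g ∈ M, (suppOf g : Set (FreeMonoid X)) := by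
    rw [hM.2.1]
    exact ⟨x, y, hyx, rfl⟩
  rw [Set.mem_iUnion₂] at hw
  obtain ⟨g, hg, hmem⟩ := hw
  rcases hM.2.2 g hg with ⟨a, b, hba, rfl⟩ | ⟨a, b, c, d, hdc, hcb, hba, rfl⟩ |
    ⟨a, b, d, hdb, hba, rfl⟩
  · -- monomial case
    obtain ⟨rfl, rfl⟩ := listpair_of_word (mem_supp_single hmem)
    by_cases htop : m2 K x y = m2 K (topEl X) (botEl X)
    · exact Or.inl (m2_inj htop)
    · exact Or.inr (Or.inl ⟨hg, htop⟩)
  · -- form 2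
    have hne : FreeMonoid.ofList [a, b] ≠ FreeMonoid.ofList [c, d] := by
      intro h
      exact absurd (listpair_of_word h).2 (by intro h'; subst h'; exact absurd hdc (not_le.mpr hcb))
    have hg' : m2 K a b - m2 K c d ∈ M \ {m2 K (topEl X) (botEl X)} :=
      ⟨hg, sub_ne_single hne⟩
    rcases mem_supp_sub (w₁ := FreeMonoid.ofList [a,b]) (w₂ := FreeMonoid.ofList [c,d]) hmem with h | h
    · -- pair is first monomial [a,b]
      obtain ⟨rfl, rfl⟩ := listpair_of_word h
      exact Or.inr (Or.inr (Or.inr ⟨c, d, hg', lt_of_le_of_lt hdc hcb⟩))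
    · -- pair is second monomial [c,d]
      obtain ⟨rfl, rfl⟩ := listpair_of_word h
      exact Or.inr (Or.inr (Or.inl ⟨a, b, hg', hg, le_of_lt hcb⟩))
  · -- form 3
    have hne : FreeMonoid.ofList [a, b] ≠ FreeMonoid.ofList [b, d] := by
      intro h
      exact absurd (listpair_of_word h).1 (ne_of_gt hba)
    have hg' : m2 K a b - m2 K b d ∈ M \ {m2 K (topEl X) (botEl X)} :=
      ⟨hg, sub_ne_single hne⟩
    rcases mem_supp_sub (w₁ := FreeMonoid.ofList [a,b]) (w₂ := FreeMonoid.ofList [b,d]) hmem with h | h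
    · obtain ⟨rfl, rfl⟩ := listpair_of_word h
      exact Or.inr (Or.inr (Or.inr ⟨y, d, hg', hdb⟩))
    · obtain ⟨rfl, rfl⟩ := listpair_of_word h
      exact Or.inr (Or.inr (Or.inl ⟨a, x, hg', hg, le_refl x⟩))

end M
end QHSAux
namespace QHSAux
variable {K : Type*} [Field K] {X : Type*}

/-- The Fin-indexed function of a list of length `m`. -/
def fOf {m : ℕ} (w : List X) (hw : w.length = m) : Fin m → X :=
  fun i => w[(i : ℕ)]'(hw ▸ i.isLt)

lemma mOf_fOf {m : ℕ} (w : List X) (hw : w.length = m) :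
    mOf K (fOf w hw) = mL K w := by
  subst hw
  rw [mOf_eq]
  exact congrArg (mL K) (List.ofFn_getElem (xs := w))

lemma getElem_mid_left (p s : List X) (a b : X) (h : _) :
    (p ++ ([a, b] ++ s))[p.length]'h = a := by
  rw [List.getElem_append_right (le_refl p.length)]
  simp

lemma getElem_mid_right (p s : List X) (a b : X) (h : _) :
    (p ++ ([a, b] ++ s))[p.length + 1]'h = b := by
  rw [List.getElem_append_right (by omega)]
  simp

lemma getElem_mid_far (p s : List X) (a b : X) (i : ℕ) (hi : p.length + 2 ≤ i) (h : _) :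
    (p ++ ([a, b] ++ s))[i]'h = s[i - p.length - 2]'(by simp at h ⊢; omega) := by
  rw [List.getElem_append_right (by omega), List.getElem_append_right (by simp; omega)]
  congr 1

lemma getElem_mid_left' (p s : List X) (a b : X) (i : ℕ) (hi : i = p.length) (h : _) :
    (p ++ ([a, b] ++ s))[i]'h = a := by
  subst hi; exact getElem_mid_left p s a b h

lemma getElem_mid_right' (p s : List X) (a b : X) (i : ℕ) (hi : i = p.length + 1) (h : _) :
    (p ++ ([a, b] ++ s))[i]'h = b := by
  subst hi; exact getElem_mid_right p s a b h

lemma getElem_drop_ofFn {m : ℕ} (u : Fin m → X) (n i : ℕ) (h : _) :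
    ((List.ofFn u).drop n)[i]'h = u ⟨n + i, by simp at h; omega⟩ := by
  rw [List.getElem_drop, List.getElem_ofFn]

end QHSAux
namespace QHSAux
variable {K : Type*} [Field K] {X : Type*} [Fintype X] [LinearOrder X] [Nonempty X]
variable {M : Set (MonoidAlgebra K (FreeMonoid X))}

lemma coreStep (hM : IsQHS K M) {m : ℕ} (u : Fin m → X)
    (hu : SingularMon K M u) (hm : 0 < m)
    (hpure : PureEl K M (u ⟨m - 1, by omega⟩))
    (k : ℕ) (hk1 : 1 ≤ k) (hkm : k < m) (v : List X) (hv : v.length = k)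
    (hC : Cong K M (v ++ (List.ofFn u).drop k) (List.ofFn u)) :
    ∃ v' : List X, ∃ hv' : v'.length = k + 1,
      Cong K M (v' ++ (List.ofFn u).drop (k + 1)) (List.ofFn u) ∧
      ∀ (h1 : v ≠ []) (h2 : v' ≠ []),
        v.getLast h1 ≤ v'.getLast h2 ∧ (k + 1 = m → v.getLast h1 < v'.getLast h2) := by
  set U := List.ofFn u with hU
  have hUlen : U.length = m := List.length_ofFn (f := u)
  have hvne : v ≠ [] := by
    intro h; rw [h] at hv; simp at hv; omega
  set x := v.getLast hvne with hx
  set p := v.dropLast with hpdef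
  have hp : p ++ [x] = v := List.dropLast_append_getLast hvne
  have hplen : p.length = k - 1 := by
    rw [hpdef, List.length_dropLast, hv]
  set y := u ⟨k, hkm⟩ with hy
  have hdrop : U.drop k = y :: U.drop (k + 1) := by
    rw [List.drop_eq_getElem_cons (show k < U.length by omega)]
    congr 1
    exact List.getElem_ofFn (f := u) (i := k) (by simp only [List.length_ofFn]; omega)
  have hW1 : v ++ U.drop k = p ++ ([x, y] ++ U.drop (k + 1)) := by
    rw [← hp, hdrop]
    simp
  rcases lt_or_ge x y with hxy | hyx
  · -- ascending case : v' = v ++ [y]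
    refine ⟨v ++ [y], by simp [hv], ?_, ?_⟩
    · have he : (v ++ [y]) ++ U.drop (k + 1) = v ++ U.drop k := by
        rw [hdrop]; simp
      rw [he]; exact hC
    · intro h1 h2
      have hgl : (v ++ [y]).getLast h2 = y := by
        rw [List.getLast_append_of_ne_nil _ (by simp)]; rfl
      rw [hgl]
      exact ⟨le_of_lt hxy, fun _ => hxy⟩
  · -- descending case
    rcases classify hM hyx with ⟨hxtop, _⟩ | hmono | ⟨a, b, hg', hgM, hxb⟩ | ⟨c, d, hg', hdy⟩
    · -- x = topEl X : contradiction with non-tameness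
      exfalso
      have hW1len : (v ++ U.drop k).length = m := by
        simp [hv, hUlen]; omega
      apply hu.2
      refine ⟨hu.1, fOf _ hW1len, ⟨k - 1, by omega⟩, ?_, ?_, ?_⟩
      · rw [mOf_fOf, mOf_eq]
        exact Cong.symm hC
      · show (v ++ U.drop k)[k-1]'_ = topEl X
        rw [List.getElem_append_left (by omega)]
        rw [← hxtop, hx, List.getLast_eq_getElem]
        congr 1
        omega
      · intro l hl
        show (v ++ U.drop k)[(l : ℕ)]'_ = u l
        have hlk : k ≤ (l : ℕ) := by
          have := hl
          simp only [Fin.lt_def] at this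
          omega
        rw [List.getElem_append_right (by omega), getElem_drop_ofFn]
        congr 1
        apply Fin.ext
        simp [hv]
        omega
    · -- the pair xy is a monomial relation : contradiction with u ∉ I_M
      exfalso
      have hmem : mL K (p ++ [x, y] ++ U.drop (k + 1)) ∈ qhsIdeal K M :=
        mem_of_mono_factor hmono p _
      rw [List.append_assoc, ← hW1] at hmem
      have : mL K U ∈ qhsIdeal K M := by
        have h2 := Submodule.sub_mem _ hmem hC
        rwa [sub_sub_cancel] at h2
      exact hu.1.1 (by rw [mOf_eq]; exact this)
    · -- the pair xy is the second monomial of a relation ab - xy : raise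
      refine ⟨p ++ [a, b], by simp [hplen]; omega, ?_, ?_⟩
      · have hcr := cong_rewrite hg' p (U.drop (k + 1))
        rw [List.append_assoc, List.append_assoc, ← hW1] at hcr
        rw [List.append_assoc]
        exact hcr.trans hC
      · intro h1 h2
        have hgl : (p ++ [a, b]).getLast h2 = b := by
          rw [List.getLast_append_of_ne_nil _ (by simp)]; rfl
        rw [hgl]
        refine ⟨hxb, ?_⟩
        intro hkm1
        have hye : y = u ⟨m - 1, by omega⟩ := by
          rw [hy]; congr 1; apply Fin.ext; simp; omega
        rw [hye] at hgM
        exact (hpure a b x hgM).2.1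
    · -- the pair xy is the first monomial of a relation xy - cd : contradiction with minimality
      exfalso
      have hW0len : (p ++ ([c, d] ++ U.drop (k + 1))).length = m := by
        simp [hplen, hUlen]; omega
      have hcr := cong_rewrite hg' p (U.drop (k + 1))
      rw [List.append_assoc, List.append_assoc, ← hW1] at hcr
      have hC0 : Cong K M U (p ++ ([c, d] ++ U.drop (k + 1))) :=
        (Cong.symm hC).trans hcr
      set w0 := fOf _ hW0len with hw0
      have hmin := hu.1.2 w0 (by rw [mOf_fOf, mOf_eq]; exact hC0)
      have hw0k : w0 ⟨k, hkm⟩ = d := by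
        show (p ++ ([c, d] ++ U.drop (k + 1)))[(k : ℕ)]'_ = d
        exact getElem_mid_right' p _ c d k (by omega) _
      have hagree : ∀ l : Fin m, (⟨k, hkm⟩ : Fin m) < l → w0 l = u l := by
        intro l hl
        have hlk : k + 1 ≤ (l : ℕ) := by
          simp only [Fin.lt_def] at hl; omega
        show (p ++ ([c, d] ++ U.drop (k + 1)))[(l : ℕ)]'_ = u l
        rw [getElem_mid_far p _ c d l (by omega), getElem_drop_ofFn]
        congr 1
        apply Fin.ext
        simp
        omega
      rcases hmin with heq | ⟨j, hj1, hj2⟩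
      · have hyd : y = d := by rw [hy, heq]; exact hw0k
        rw [hyd] at hdy
        exact lt_irrefl d hdy
      · rcases lt_trichotomy j ⟨k, hkm⟩ with h | h | h
        · have h2 := hj2 ⟨k, hkm⟩ h
          rw [hw0k] at h2
          rw [← hy] at h2
          rw [h2] at hdy
          exact lt_irrefl d hdy
        · rw [h, hw0k] at hj1
          rw [← hy] at hj1
          exact lt_irrefl d (hdy.trans hj1)
        · rw [hagree j h] at hj1
          exact lt_irrefl _ hj1

lemma mainAux (hM : IsQHS K M) {m : ℕ} (u : Fin m → X)
    (hu : SingularMon K M u) (hm : 0 < m)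
    (hpure : PureEl K M (u ⟨m - 1, by omega⟩)) :
    ∀ n k, 1 ≤ k → k + (n + 1) = m → ∀ v : List X, v.length = k →
      Cong K M (v ++ (List.ofFn u).drop k) (List.ofFn u) →
      ∃ w : List X, ∃ hw : w.length = m, Cong K M (List.ofFn u) w ∧
        ∀ (h1 : v ≠ []) (h2 : w ≠ []), v.getLast h1 < w.getLast h2 := by
  intro n
  induction n with
  | zero =>
    intro k hk1 hkm v hv hC
    obtain ⟨v', hv', hC', hlast⟩ := coreStep hM u hu hm hpure k hk1 (by omega) v hv hC
    have hd : (List.ofFn u).drop (k + 1) = [] := by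
      apply List.drop_eq_nil_of_le
      rw [List.length_ofFn]
      omega
    rw [hd, List.append_nil] at hC'
    refine ⟨v', by rw [hv']; omega, hC'.symm, ?_⟩
    intro h1 h2
    exact (hlast h1 h2).2 (by omega)
  | succ n ih =>
    intro k hk1 hkm v hv hC
    obtain ⟨v', hv', hC', hlast⟩ := coreStep hM u hu hm hpure k hk1 (by omega) v hv hC
    obtain ⟨w, hw, hCw, hwlast⟩ := ih (k + 1) (by omega) (by omega) v' hv' hC'
    refine ⟨w, hw, hCw, fun h1 h2 => ?_⟩
    have hv'ne : v' ≠ [] := by intro h; rw [h] at hv'; simp at hv'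
    exact lt_of_le_of_lt (hlast h1 hv'ne).1 (hwlast hv'ne h2)

end QHSAux
/-- **Lemma (singp).** If `u = u_1 … u_m` is singular with `u_m` pure, `1 ≤ k < m`
and `v = v_1 … v_k` satisfies `v = u_1 … u_k (mod I_M)`, then there is a degree-`m`
monomial `w` with `w_m > v_k` and `u = w (mod I_M)`. -/
theorem singular_pure_last_letter_replacement
    (K : Type*) [Field K] (X : Type*) [Fintype X] [LinearOrder X] [Nonempty X]
    (M : Set (MonoidAlgebra K (FreeMonoid X))) (hM : IsQHS K M)
    (m k : ℕ) (hk1 : 1 ≤ k) (hk : k < m) (u : Fin m → X)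
    (hu : SingularMon K M u)
    (hpure : PureEl K M (u ⟨m - 1, by omega⟩))
    (v : Fin k → X)
    (hv : mOf K v - mOf K (fun i : Fin k => u (Fin.castLE (le_of_lt hk) i)) ∈ qhsIdeal K M) :
    ∃ w : Fin m → X,
      v ⟨k - 1, by omega⟩ < w ⟨m - 1, by omega⟩ ∧
      mOf K u - mOf K w ∈ qhsIdeal K M := by
  classical
  have hm : 0 < m := by omega
  -- convert `hv` to a congruence of lists
  have htake : List.ofFn (fun i : Fin k => u (Fin.castLE (le_of_lt hk) i)) = (List.ofFn u).take k := by
    apply List.ext_getElem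
    · simp; omega
    · intro n h1 h2
      simp [List.getElem_ofFn, List.getElem_take]
  have hC0 : QHSAux.Cong K M (List.ofFn v) ((List.ofFn u).take k) := by
    rw [QHSAux.Cong, ← QHSAux.mOf_eq, ← htake, ← QHSAux.mOf_eq]
    exact hv
  have hC : QHSAux.Cong K M (List.ofFn v ++ (List.ofFn u).drop k) (List.ofFn u) := by
    have h := hC0.append_right ((List.ofFn u).drop k)
    rwa [List.take_append_drop] at h
  obtain ⟨w, hw, hCw, hlast⟩ := QHSAux.mainAux hM u hu hm hpure (m - k - 1) k hk1
    (by omega) (List.ofFn v) (by simp) hC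
  refine ⟨QHSAux.fOf w hw, ?_, ?_⟩
  · have hvne : List.ofFn v ≠ [] := by
      intro h
      have := congrArg List.length h
      simp at this
      omega
    have hwne : w ≠ [] := by
      intro h
      rw [h] at hw
      simp at hw
      omega
    have h1 : (List.ofFn v).getLast hvne = v ⟨k - 1, by omega⟩ := by
      rw [List.getLast_eq_getElem]
      simp only [List.length_ofFn, List.getElem_ofFn]
    have h2 : w.getLast hwne = QHSAux.fOf w hw ⟨m - 1, by omega⟩ := by
      rw [List.getLast_eq_getElem]
      show w[w.length - 1]'_ = w[(m - 1 : ℕ)]'_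
      congr 1
      omega
    rw [← h1, ← h2]
    exact hlast hvne hwne
  · rw [QHSAux.mOf_fOf, QHSAux.mOf_eq]
    exact hCw
end
end

section
/- In the extension construction, let k be a non-negative integer. If ab ∈ M_0' (with a, b ∈ X_0), then a x_1^k b ∈ I; and if ab − cd ∈ M_0' (with a, b, c, d ∈ X_0), then a x_1^k b − c x_1^k d ∈ I, where I is the two-sided ideal of K⟨X⟩ generated by M'. -/
noncomputable section

/-- The set `X₀ = {x_3, …, x_{n-2}}` (0-based: indices `2, …, n-3` of `Fin n`). -/
abbrev X0 (n : ℕ) := {x : Fin n // 2 ≤ x.val ∧ x.val + 3 ≤ n}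

instance factNeZero (n : ℕ) [Fact (5 ≤ n)] : NeZero n :=
  ⟨by have h := Fact.out (p := 5 ≤ n); omega⟩

instance factNonemptyX0 (n : ℕ) [Fact (5 ≤ n)] : Nonempty (X0 n) :=
  ⟨⟨⟨2, by have h := Fact.out (p := 5 ≤ n); omega⟩,
    ⟨le_refl 2, show 2 + 3 ≤ n by have h := Fact.out (p := 5 ≤ n); omega⟩⟩⟩

/-- The generator `x_j` of the paper (1-based index `j`) as an element of `Fin n`. -/
def px (n : ℕ) [NeZero n] (j : ℕ) : Fin n := (Fin.ofNat n (j - 1) : Fin n)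

/-- The embedding `K⟨X₀⟩ → K⟨X⟩` induced by the inclusion `X₀ ⊆ X`. -/
def emb (K : Type*) [Field K] (n : ℕ)
    (f : MonoidAlgebra K (FreeMonoid (X0 n))) : MonoidAlgebra K (FreeMonoid (Fin n)) :=
  MonoidAlgebra.ofCoeff (Finsupp.mapDomain (FreeMonoid.map (fun x : X0 n => (x : Fin n))) f.coeff)

/-- The set `M'` of the extension construction. -/
def Mext' (K : Type*) [Field K] (n : ℕ) [Fact (5 ≤ n)]
    (M0 : Set (MonoidAlgebra K (FreeMonoid (X0 n)))) :
    Set (MonoidAlgebra K (FreeMonoid (Fin n))) :=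
  (emb K n '' (M0 \ {m2 K (topEl (X0 n)) (botEl (X0 n))})) ∪
  {g | ∃ j : ℕ, 2 ≤ j ∧ j ≤ n - 2 ∧
      g = m2 K (px n n) (px n j) - m2 K (px n j) (px n 1)} ∪
  {g | ∃ j : ℕ, 2 ≤ j ∧ j ≤ n - 3 ∧
      g = m2 K (px n (n-1)) (px n (j+1)) - m2 K (px n j) (px n 2)} ∪
  {m2 K (px n n) (px n n) - m2 K (px n (n-1)) (px n 1),
   m2 K (px n n) (px n (n-1)) - m2 K (px n (n-2)) (px n 2),
   m2 K (px n (n-1)) (px n (n-1)) - m2 K (px n (n-2)) (px n 3),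
   m2 K (px n (n-1)) (px n 2) - m2 K (px n 1) (px n 1)}

/-- The set `M = M' ∪ {x_n x_1}` of the extension construction. -/
def Mext (K : Type*) [Field K] (n : ℕ) [Fact (5 ≤ n)]
    (M0 : Set (MonoidAlgebra K (FreeMonoid (X0 n)))) :
    Set (MonoidAlgebra K (FreeMonoid (Fin n))) :=
  Mext' K n M0 ∪ {m2 K (px n n) (px n 1)}

/-- The interleaved word `u_1 x_1^{ks 0} u_2 x_1^{ks 1} ⋯ x_1^{ks (m-2)} u_m`. -/
def ileave (n : ℕ) [NeZero n] {m : ℕ} (u : Fin m → Fin n) (ks : ℕ → ℕ) :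
    FreeMonoid (Fin n) :=
  (List.ofFn fun i : Fin m =>
    if i.val + 1 = m then FreeMonoid.of (u i)
    else FreeMonoid.of (u i) * (FreeMonoid.of (px n 1)) ^ ks i.val).prod

section Aux

variable {K : Type*} [Field K]

lemma mOfW_mul {X : Type*} (w w' : FreeMonoid X) :
    mOfW K (w * w') = mOfW K w * mOfW K w' := by
  simp [mOfW, MonoidAlgebra.single_mul_single]

lemma mOfW_pow {X : Type*} (w : FreeMonoid X) (k : ℕ) :
    mOfW K (w ^ k) = (mOfW K w) ^ k := by
  induction k with
  | zero => simp [mOfW, pow_zero]; rfl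
  | succ k ih => rw [pow_succ, pow_succ, mOfW_mul, ih]

lemma idealSpan_gen_mem {A : Type*} [Ring A] [Algebra K A] {s : Set A}
    (p q a : A) (ha : a ∈ s) : p * a * q ∈ idealSpan K s :=
  Submodule.subset_span ⟨p, q, a, ha, rfl⟩

lemma idealSpan_mem_of_mem {A : Type*} [Ring A] [Algebra K A] {s : Set A}
    {a : A} (ha : a ∈ s) : a ∈ idealSpan K s := by
  have := idealSpan_gen_mem (K := K) 1 1 a ha
  simpa using this

lemma idealSpan_mul_left {A : Type*} [Ring A] [Algebra K A] {s : Set A}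
    {x : A} (r : A) (hx : x ∈ idealSpan K s) : r * x ∈ idealSpan K s := by
  induction hx using Submodule.span_induction with
  | mem y hy =>
    obtain ⟨p, q, a, ha, rfl⟩ := hy
    exact Submodule.subset_span ⟨r * p, q, a, ha, by simp [mul_assoc]⟩
  | zero => simp
  | add y z _ _ hy hz => rw [mul_add]; exact add_mem hy hz
  | smul c y _ hy => rw [Algebra.mul_smul_comm]; exact Submodule.smul_mem _ c hy

lemma idealSpan_mul_right {A : Type*} [Ring A] [Algebra K A] {s : Set A}
    {x : A} (r : A) (hx : x ∈ idealSpan K s) : x * r ∈ idealSpan K s := by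
  induction hx using Submodule.span_induction with
  | mem y hy =>
    obtain ⟨p, q, a, ha, rfl⟩ := hy
    exact Submodule.subset_span ⟨p, q * r, a, ha, by simp [mul_assoc]⟩
  | zero => simp
  | add y z _ _ hy hz => rw [add_mul]; exact add_mem hy hz
  | smul c y _ hy => rw [Algebra.smul_mul_assoc]; exact Submodule.smul_mem _ c hy

lemma emb_m2 (n : ℕ) [Fact (5 ≤ n)] (a b : X0 n) :
    emb K n (m2 K a b) = m2 K (a : Fin n) (b : Fin n) := by
  rw [emb, m2, m2, mOfW, mOfW, MonoidAlgebra.coeff_single, Finsupp.mapDomain_single,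
    MonoidAlgebra.ofCoeff_single]
  simp

lemma emb_sub (n : ℕ) [Fact (5 ≤ n)]
    (f g : MonoidAlgebra K (FreeMonoid (X0 n))) :
    emb K n (f - g) = emb K n f - emb K n g := by
  simp only [emb]
  rw [show (f - g).coeff = f.coeff - g.coeff from rfl, Finsupp.mapDomain_sub]
  rfl

/-- The generator `x_n x_j - x_j x_1` of `M'`, for `x_j = e ∈ X₀`. -/
lemma gen_mem_Mext' (n : ℕ) [Fact (5 ≤ n)]
    (M0 : Set (MonoidAlgebra K (FreeMonoid (X0 n)))) (e : X0 n) :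
    m2 K (px n n) (e : Fin n) - m2 K (e : Fin n) (px n 1) ∈ Mext' K n M0 := by
  have h5 : 5 ≤ n := Fact.out
  have he := e.property
  left; left; right
  refine ⟨(e : Fin n).val + 1, by omega, by omega, ?_⟩
  have : px n ((e : Fin n).val + 1) = (e : Fin n) := by
    apply Fin.ext; simp [px, Fin.val_ofNat, Nat.mod_eq_of_lt (e : Fin n).isLt]
  rw [this]

/-- Key lemma: `e x₁^k ≡ xₙ^k e (mod I)` for `e ∈ X₀`. -/
lemma key_shift (n : ℕ) [Fact (5 ≤ n)]
    (M0 : Set (MonoidAlgebra K (FreeMonoid (X0 n)))) (e : X0 n) (k : ℕ) :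
    mOfW K (FreeMonoid.of (e : Fin n) * (FreeMonoid.of (px n 1)) ^ k) -
      mOfW K ((FreeMonoid.of (px n n)) ^ k * FreeMonoid.of (e : Fin n)) ∈
      idealSpan K (Mext' K n M0) := by
  induction k with
  | zero => simp
  | succ k ih =>
    have h1 := idealSpan_mul_right (mOfW K (FreeMonoid.of (px n 1))) ih
    have h2 : mOfW K ((FreeMonoid.of (px n n)) ^ k) *
        (m2 K (px n n) (e : Fin n) - m2 K (e : Fin n) (px n 1)) *
        (1 : MonoidAlgebra K (FreeMonoid (Fin n))) ∈ idealSpan K (Mext' K n M0) :=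
      idealSpan_gen_mem _ _ _ (gen_mem_Mext' n M0 e)
    have := sub_mem h1 h2
    convert this using 1
    simp only [m2, mOfW_mul, mOfW_pow, mul_one]
    noncomm_ring

end Aux

/-- **Lemma (m30).** In the extension construction: if `ab ∈ M₀'` then
`a x_1^k b ∈ I`, and if `ab - cd ∈ M₀'` then `a x_1^k b = c x_1^k d (mod I)`. -/
theorem ext_interleaved_relations
    (K : Type*) [Field K] (n : ℕ) [Fact (5 ≤ n)]
    (M0 : Set (MonoidAlgebra K (FreeMonoid (X0 n)))) (hM0 : IsQHS K M0) (k : ℕ) :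
    (∀ a b : X0 n,
      m2 K a b ∈ M0 \ {m2 K (topEl (X0 n)) (botEl (X0 n))} →
      mOfW K (FreeMonoid.of (a : Fin n) * (FreeMonoid.of (px n 1)) ^ k *
        FreeMonoid.of (b : Fin n)) ∈ idealSpan K (Mext' K n M0)) ∧
    (∀ a b c d : X0 n,
      m2 K a b - m2 K c d ∈ M0 \ {m2 K (topEl (X0 n)) (botEl (X0 n))} →
      mOfW K (FreeMonoid.of (a : Fin n) * (FreeMonoid.of (px n 1)) ^ k *
          FreeMonoid.of (b : Fin n)) -
        mOfW K (FreeMonoid.of (c : Fin n) * (FreeMonoid.of (px n 1)) ^ k *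
          FreeMonoid.of (d : Fin n)) ∈ idealSpan K (Mext' K n M0)) := by
  constructor
  · intro a b hab
    have hgen : m2 K (a : Fin n) (b : Fin n) ∈ Mext' K n M0 := by
      left; left; left
      exact ⟨m2 K a b, hab, emb_m2 n a b⟩
    have hI : m2 K (a : Fin n) (b : Fin n) ∈ idealSpan K (Mext' K n M0) :=
      idealSpan_mem_of_mem hgen
    have h1 := idealSpan_mul_right (mOfW K (FreeMonoid.of (b : Fin n)))
      (key_shift n M0 a k)
    have h2 := idealSpan_mul_left (mOfW K ((FreeMonoid.of (px n n)) ^ k)) hI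
    have := add_mem h1 h2
    convert this using 1
    simp only [m2, mOfW_mul, mOfW_pow]
    noncomm_ring
  · intro a b c d habcd
    have hgen : m2 K (a : Fin n) (b : Fin n) - m2 K (c : Fin n) (d : Fin n) ∈
        Mext' K n M0 := by
      left; left; left
      exact ⟨m2 K a b - m2 K c d, habcd, by rw [emb_sub, emb_m2, emb_m2]⟩
    have hI : m2 K (a : Fin n) (b : Fin n) - m2 K (c : Fin n) (d : Fin n) ∈
        idealSpan K (Mext' K n M0) := idealSpan_mem_of_mem hgen
    have h1 := idealSpan_mul_right (mOfW K (FreeMonoid.of (b : Fin n)))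
      (key_shift n M0 a k)
    have h1' := idealSpan_mul_right (mOfW K (FreeMonoid.of (d : Fin n)))
      (key_shift n M0 c k)
    have h2 := idealSpan_mul_left (mOfW K ((FreeMonoid.of (px n n)) ^ k)) hI
    have := add_mem (sub_mem h1 h1') h2
    convert this using 1
    simp only [m2, mOfW_mul, mOfW_pow]
    noncomm_ring
end
end
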